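/- Let T = (n; δ, σ) with σ ≠ 0 and δ ≥ 2|σ| be positive definite, and let R ∈ ℝ^{n×n} be upper triangular with positive diagonal entries such that RᵀR = T. Then for every i = 2,…,n one has r_{i−1,i−1} > |r_{i−1,i}| and r_{i,i} > |r_{i−1,i}|; that is, each off-diagonal entry of the Cholesky factor is strictly dominated in absolute value by the two diagonal entries adjacent to it. -/

import Mathlib

open Real Filter

noncomputable def tridiag (n : ℕ) (d s : ℝ) : Matrix (Fin n) (Fin n) ℝ :=
  Matrix.of fun i j =>
    if (i : ℕ) = (j : ℕ) then d
    else if (i : ℕ) + 1 = (j : ℕ) ∨ (j : ℕ) + 1 = (i : ℕ) then s else 0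

noncomputable def lam (n : ℕ) (δ σ : ℝ) (h : ℕ) : ℝ :=
  δ + 2 * σ * Real.cos (h * Real.pi / (n + 1))

noncomputable def kap (n h : ℕ) : ℝ :=
  Real.sqrt (1 / (n : ℝ) + 2 / ((n : ℝ) - 1) * Real.cos (h * Real.pi / (n + 1)) ^ 2)

noncomputable def evec (n h : ℕ) : Fin n → ℝ :=
  fun k => Real.sqrt (2 / (n + 1)) * Real.sin (h * (k.1 + 1) * Real.pi / (n + 1))

noncomputable def frobNorm {n : ℕ} (A : Matrix (Fin n) (Fin n) ℝ) : ℝ :=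
  Real.sqrt (∑ i, ∑ j, A i j ^ 2)

/-- if `δ ≥ 2|σ| > 0` (so `T = (n; δ, σ)` is positive definite) and `R` is its
Cholesky factor, each off-diagonal entry of `R` is strictly dominated in absolute value by the two
adjacent diagonal entries. -/
theorem stmt_14 (n : ℕ) (hn : 2 ≤ n) (δ σ : ℝ) (hσ : σ ≠ 0) (hδ : 2 * |σ| ≤ δ)
    (hposdef : (tridiag n δ σ).PosDef)
    (R : Matrix (Fin n) (Fin n) ℝ)
    (hupper : ∀ i j : Fin n, (j : ℕ) < (i : ℕ) → R i j = 0)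
    (hdiagpos : ∀ i : Fin n, 0 < R i i)
    (hfact : R.transpose * R = tridiag n δ σ) :
    ∀ (j : ℕ) (hj : j + 1 < n),
      |R ⟨j, by omega⟩ ⟨j + 1, hj⟩| < R ⟨j, by omega⟩ ⟨j, by omega⟩ ∧
      |R ⟨j, by omega⟩ ⟨j + 1, hj⟩| < R ⟨j + 1, hj⟩ ⟨j + 1, hj⟩ := by
  have hσpos : 0 < |σ| := abs_pos.mpr hσ
  have hfact' : ∀ i j : Fin n, (∑ k, R k i * R k j) = tridiag n δ σ i j := by
    intro i j
    have := Matrix.ext_iff.mpr hfact i j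
    rwa [Matrix.mul_apply] at this
  -- R is bidiagonal
  have hzero : ∀ m : ℕ, ∀ i j : Fin n, (i : ℕ) = m → (i : ℕ) + 1 < (j : ℕ) → R i j = 0 := by
    intro m
    induction m using Nat.strong_induction_on with
    | _ m ih =>
      intro i j him hij
      have hT := hfact' i j
      have hTij : tridiag n δ σ i j = 0 := by
        simp only [tridiag, Matrix.of_apply]
        rw [if_neg (by omega), if_neg (by omega)]
      rw [hTij] at hT
      have hsum : (∑ k, R k i * R k j) = R i i * R i j := by
        apply Finset.sum_eq_single_of_mem i (Finset.mem_univ i)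
        intro k _ hk
        rcases lt_or_gt_of_ne (fun h : (k : ℕ) = (i : ℕ) => hk (Fin.ext h)) with h | h
        · rcases Nat.lt_or_ge ((k : ℕ) + 1) (i : ℕ) with h2 | h2
          · rw [ih k (by omega) k i rfl h2, zero_mul]
          · have hkj : (k : ℕ) + 1 < (j : ℕ) := by omega
            rw [ih k (by omega) k j rfl hkj, mul_zero]
        · rw [hupper k i h, zero_mul]
      rw [hsum] at hT
      exact (mul_eq_zero.mp hT).resolve_left (ne_of_gt (hdiagpos i))
  have hzero' : ∀ i j : Fin n, (i : ℕ) + 1 < (j : ℕ) → R i j = 0 :=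
    fun i j h => hzero i.1 i j rfl h
  -- the column relations
  have hcol : ∀ (j : ℕ) (hj : j + 1 < n),
      R ⟨j, by omega⟩ ⟨j, by omega⟩ * R ⟨j, by omega⟩ ⟨j+1, hj⟩ = σ ∧
      R ⟨j, by omega⟩ ⟨j+1, hj⟩ ^ 2 + R ⟨j+1, hj⟩ ⟨j+1, hj⟩ ^ 2 = δ := by
    intro j hj
    set a : Fin n := ⟨j, by omega⟩
    set b : Fin n := ⟨j+1, hj⟩
    constructor
    · have hT := hfact' a b
      have hTab : tridiag n δ σ a b = σ := by
        simp only [tridiag, Matrix.of_apply]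
        rw [if_neg (by simp [a, b]), if_pos (by simp [a, b])]
      rw [hTab] at hT
      rw [← hT]
      symm
      apply Finset.sum_eq_single_of_mem a (Finset.mem_univ a)
      intro k _ hk
      rcases lt_or_gt_of_ne (fun h : (k : ℕ) = (a : ℕ) => hk (Fin.ext h)) with h | h
      · rw [hzero' k b (by have h' : (k : ℕ) < j := h; show (k : ℕ) + 1 < j + 1; omega), mul_zero]
      · rw [hupper k a h, zero_mul]
    · have hT := hfact' b b
      have hTbb : tridiag n δ σ b b = δ := by
        simp [tridiag]
      rw [hTbb] at hT
      rw [← hT]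
      have hab : a ≠ b := by simp [a, b, Fin.ext_iff]
      have hsub : (∑ k, R k b * R k b) = ∑ k ∈ ({a, b} : Finset (Fin n)), R k b * R k b := by
        symm
        apply Finset.sum_subset (Finset.subset_univ _)
        intro k _ hk
        simp only [Finset.mem_insert, Finset.mem_singleton] at hk
        push_neg at hk
        rcases lt_or_gt_of_ne (fun h : (k : ℕ) = (b : ℕ) => hk.2 (Fin.ext h)) with h | h
        · have : (k : ℕ) + 1 < (b : ℕ) := by
            have : (k : ℕ) ≠ (a : ℕ) := fun h => hk.1 (Fin.ext h)
            simp only [a, b] at *; omega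
          rw [hzero' k b this, mul_zero]
        · rw [hupper k b h, zero_mul]
      rw [hsub, Finset.sum_pair hab]
      ring
  -- the invariant: d_j^2 > |σ|
  have hinv : ∀ (j : ℕ) (hj : j < n), |σ| < R ⟨j, hj⟩ ⟨j, hj⟩ ^ 2 := by
    intro j
    induction j with
    | zero =>
      intro hj
      have hT := hfact' ⟨0, hj⟩ ⟨0, hj⟩
      have hT00 : tridiag n δ σ ⟨0, hj⟩ ⟨0, hj⟩ = δ := by
        simp [tridiag]
      rw [hT00] at hT
      have hsum : (∑ k, R k ⟨0, hj⟩ * R k ⟨0, hj⟩) = R ⟨0, hj⟩ ⟨0, hj⟩ * R ⟨0, hj⟩ ⟨0, hj⟩ := by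
        apply Finset.sum_eq_single_of_mem _ (Finset.mem_univ _)
        intro k _ hk
        have h : (0 : ℕ) < (k : ℕ) := by
          rcases Nat.eq_zero_or_pos (k : ℕ) with h | h
          · exact absurd (Fin.ext h) hk
          · exact h
        rw [hupper k ⟨0, hj⟩ h, zero_mul]
      rw [hsum] at hT
      nlinarith [hσpos]
    | succ k ihk =>
      intro hj
      have hk1 : k + 1 < n := hj
      obtain ⟨hσeq, hδeq⟩ := hcol k hk1
      have hd2 := ihk (by omega)
      set d := R ⟨k, by omega⟩ ⟨k, by omega⟩
      set e := R ⟨k, by omega⟩ ⟨k+1, hk1⟩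
      have he2 : e ^ 2 < |σ| := by
        rcases eq_or_ne e 0 with h | h
        · rw [h]; simpa using hσpos
        · have hepos : 0 < e ^ 2 := by positivity
          have h1 : e ^ 2 * |σ| < |σ| * |σ| := by
            calc e ^ 2 * |σ| < e ^ 2 * d ^ 2 := mul_lt_mul_of_pos_left hd2 hepos
              _ = σ ^ 2 := by rw [← hσeq]; ring
              _ = |σ| * |σ| := by rw [← sq_abs]; ring
          exact lt_of_mul_lt_mul_right h1 hσpos.le
      have : R ⟨k+1, hj⟩ ⟨k+1, hj⟩ ^ 2 = δ - e ^ 2 := by linarith [hδeq]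
      rw [this]
      linarith
  -- conclusion
  intro j hj
  obtain ⟨hσeq, hδeq⟩ := hcol j hj
  have hdj2 := hinv j (by omega)
  have hdj12 := hinv (j+1) hj
  set d := R ⟨j, by omega⟩ ⟨j, by omega⟩
  set d' := R ⟨j+1, hj⟩ ⟨j+1, hj⟩
  set e := R ⟨j, by omega⟩ ⟨j+1, hj⟩
  have he2 : e ^ 2 < |σ| := by
    rcases eq_or_ne e 0 with h | h
    · rw [h]; simpa using hσpos
    · have hepos : 0 < e ^ 2 := by positivity
      have h1 : e ^ 2 * |σ| < |σ| * |σ| := by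
        calc e ^ 2 * |σ| < e ^ 2 * d ^ 2 := mul_lt_mul_of_pos_left hdj2 hepos
          _ = σ ^ 2 := by rw [← hσeq]; ring
          _ = |σ| * |σ| := by rw [← sq_abs]; ring
      exact lt_of_mul_lt_mul_right h1 hσpos.le
  have hd : 0 < d := hdiagpos _
  have hd' : 0 < d' := hdiagpos _
  constructor
  · have : |e| ^ 2 < d ^ 2 := by rw [sq_abs]; linarith
    exact lt_of_pow_lt_pow_left₀ 2 hd.le this
  · have : |e| ^ 2 < d' ^ 2 := by rw [sq_abs]; linarith
    exact lt_of_pow_lt_pow_left₀ 2 hd'.le this
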